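/- arXiv:2604.04416 — 3 statements merged into one kernel-verified Lean document; each statement's English description precedes it below -/
import Mathlib

section
/- Let a > 1 and let (Ω, μ) be a measure space with 0 < μ(Ω) < ∞. Let u : Ω → ℝ be integrable, with e^{u} also integrable, and suppose ∫_Ω (e^{u} − 1 − a·u) dμ = 0. Let ū := (1/μ(Ω)) ∫_Ω u dμ denote the average of u. Then 0 ≤ ū ≤ ξ_a, where ξ_a is the unique positive root of e^t − 1 − a·t = 0. -/
open MeasureTheory

theorem stmt_6 {α : Type*} [MeasurableSpace α] (μ : Measure α)
    (hpos : 0 < μ Set.univ) (hfin : μ Set.univ < ⊤)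
    (a : ℝ) (ha : 1 < a) (ξ : ℝ) (hξ : 0 < ξ)
    (hroot : Real.exp ξ - 1 - a * ξ = 0)
    (u : α → ℝ) (hu : Integrable u μ)
    (hexp : Integrable (fun x => Real.exp (u x)) μ)
    (hzero : ∫ x, (Real.exp (u x) - 1 - a * u x) ∂μ = 0)
    (ubar : ℝ) (hubar : ubar = (μ Set.univ).toReal⁻¹ * ∫ x, u x ∂μ) :
    0 ≤ ubar ∧ ubar ≤ ξ := by
  haveI : IsFiniteMeasure μ := ⟨hfin⟩
  haveI : NeZero μ := ⟨by
    intro h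
    rw [h] at hpos
    simp at hpos⟩
  have hμpos : 0 < (μ Set.univ).toReal := ENNReal.toReal_pos hpos.ne' hfin.ne
  -- Jensen
  have hJ : Real.exp (⨍ x, u x ∂μ) ≤ ⨍ x, Real.exp (u x) ∂μ := by
    have := convexOn_exp.map_average_le Real.continuous_exp.continuousOn isClosed_univ
      (Filter.Eventually.of_forall fun x => Set.mem_univ (u x)) hu hexp
    simpa using this
  have havg : (⨍ x, u x ∂μ) = ubar := by
    rw [hubar, average_eq, smul_eq_mul]
    rfl
  -- compute ∫ exp u
  have hint : ∫ x, Real.exp (u x) ∂μ = (μ Set.univ).toReal + a * ∫ x, u x ∂μ := by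
    have hA : Integrable (fun x => Real.exp (u x) - 1) μ := hexp.sub (integrable_const 1)
    have h1 : ∫ x, (Real.exp (u x) - 1 - a * u x) ∂μ
        = (∫ x, Real.exp (u x) ∂μ) - (μ Set.univ).toReal - a * ∫ x, u x ∂μ := by
      rw [integral_sub hA (hu.const_mul a), integral_sub hexp (integrable_const 1),
        integral_const, integral_const_mul]
      simp [smul_eq_mul, Measure.real]
    rw [h1] at hzero
    linarith
  have key : Real.exp ubar ≤ 1 + a * ubar := by
    rw [← havg]
    refine hJ.trans ?_
    rw [average_eq, smul_eq_mul, hint, havg, hubar, mul_add]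
    rw [Measure.real, inv_mul_cancel₀ hμpos.ne']
    apply le_of_eq
    ring
  have h0 : 0 ≤ ubar := by
    by_contra h
    push_neg at h
    have := Real.add_one_le_exp ubar
    nlinarith
  refine ⟨h0, ?_⟩
  by_contra h
  push_neg at h
  -- strict convexity: g(ξ) < (1-λ) g(0) + λ g(ubar) with λ = ξ/ubar
  have hub : 0 < ubar := hξ.trans h
  have hsc := strictConvexOn_exp.2 (Set.mem_univ (0:ℝ)) (Set.mem_univ ubar)
    (by linarith : (0:ℝ) ≠ ubar)
    (show (0:ℝ) < 1 - ξ/ubar by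
      have : ξ/ubar < 1 := (div_lt_one hub).2 h
      linarith)
    (show (0:ℝ) < ξ/ubar by positivity) (by ring)
  rw [smul_zero, zero_add, smul_eq_mul, div_mul_cancel₀ _ hub.ne'] at hsc
  simp only [smul_eq_mul] at hsc
  have : Real.exp ξ < (1 - ξ/ubar) * 1 + ξ/ubar * Real.exp ubar := by
    simpa [Real.exp_zero] using hsc
  have hlam : 0 < ξ/ubar := by positivity
  have hc : ξ / ubar * ubar = ξ := div_mul_cancel₀ _ hub.ne'
  nlinarith [mul_le_mul_of_nonneg_left key hlam.le]
end

section
/- Let Ω ⊆ ℝ² be a measurable set and D > 0 a constant with ‖x − y‖ ≤ D for all x, y ∈ Ω (e.g. D is the diameter of Ω). Let K ≥ 0, let g : Ω → ℝ be integrable with ‖g‖_{L¹(Ω)} = ∫_Ω |g| dy > 0, and let v : Ω → ℝ be a measurable function satisfying the pointwise bound |v(x)| ≤ ∫_Ω ((1/π)·log(D/‖x − y‖) + K)·|g(y)| dy for almost every x ∈ Ω. Then ∫_Ω exp( π·|v(x)| / ‖g‖_{L¹(Ω)} ) dx ≤ 2π·D²·e^{πK}. -/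
open MeasureTheory Real
open scoped ENNReal

open Set Metric in
private lemma polar2 (f : ℝ → ℝ≥0∞) (hf : Measurable f) :
    ∫⁻ x : EuclideanSpace ℝ (Fin 2), f ‖x‖ =
      2 * volume (ball (0 : EuclideanSpace ℝ (Fin 2)) 1) *
        ∫⁻ y in Ioi (0:ℝ), ENNReal.ofReal y * f y := by
  set E := EuclideanSpace ℝ (Fin 2)
  have hdim : Module.finrank ℝ E = 2 := finrank_euclideanSpace_fin
  have h1 : ∫⁻ x : E, f ‖x‖ = ∫⁻ x : ({(0:E)}ᶜ : Set E), f ‖(x:E)‖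
      ∂((volume : Measure E).comap Subtype.val) := by
    rw [lintegral_subtype_comap (measurableSet_singleton (0:E)).compl
      (fun x => f ‖x‖), MeasureTheory.restrict_compl_singleton]
  have key := (Measure.measurePreserving_homeomorphUnitSphereProd
      (volume : Measure E)).lintegral_comp_emb (Homeomorph.measurableEmbedding _)
      (fun z : sphere (0:E) 1 × Ioi (0:ℝ) => f z.2)
  have h2 : ∫⁻ x : ({(0:E)}ᶜ : Set E), f ‖(x:E)‖
      ∂((volume : Measure E).comap Subtype.val)
      = ∫⁻ z : (sphere (0:E) 1 × Ioi (0:ℝ)), f z.2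
        ∂((volume : Measure E).toSphere.prod
          (MeasureTheory.Measure.volumeIoiPow (Module.finrank ℝ E - 1))) := by
    rw [← key]
    exact lintegral_congr fun x => by simp
  have h3 : ∫⁻ z : (sphere (0:E) 1 × Ioi (0:ℝ)), f z.2
        ∂((volume : Measure E).toSphere.prod
          (MeasureTheory.Measure.volumeIoiPow (Module.finrank ℝ E - 1)))
      = (∫⁻ r : Ioi (0:ℝ), f r
          ∂(MeasureTheory.Measure.volumeIoiPow (Module.finrank ℝ E - 1)))
        * (volume : Measure E).toSphere univ := by
    rw [lintegral_prod (fun z : sphere (0:E) 1 × Ioi (0:ℝ) => f z.2)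
      ((hf.comp (measurable_subtype_coe.comp measurable_snd)).aemeasurable)]
    simp [lintegral_const, mul_comm]
  have h4 : (∫⁻ r : Ioi (0:ℝ), f r
          ∂(MeasureTheory.Measure.volumeIoiPow (Module.finrank ℝ E - 1)))
      = ∫⁻ y in Ioi (0:ℝ), ENNReal.ofReal y * f y := by
    rw [Measure.volumeIoiPow,
      lintegral_withDensity_eq_lintegral_mul _
        ((measurable_subtype_coe.pow_const _).ennreal_ofReal)
        (g := fun r : Ioi (0:ℝ) => f ↑r) (hf.comp measurable_subtype_coe),
      ← lintegral_subtype_comap measurableSet_Ioi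
        (fun y : ℝ => ENNReal.ofReal y * f y)]
    exact lintegral_congr fun r => by simp [hdim]
  rw [h1, h2, h3, h4, Measure.toSphere_apply_univ, hdim]
  ring

open Set Metric in
private lemma ball_lintegral (D : ℝ) (hD : 0 < D) (y : EuclideanSpace ℝ (Fin 2)) :
    ∫⁻ x in closedBall y D, ENNReal.ofReal (D / ‖x - y‖)
      = ENNReal.ofReal (2 * π * D ^ 2) := by
  set f₀ : ℝ → ℝ≥0∞ := fun r => if r ≤ D then ENNReal.ofReal (D / r) else 0 with hf₀
  have hf₀m : Measurable f₀ := Measurable.ite (measurableSet_le measurable_id measurable_const)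
    ((measurable_const.div measurable_id).ennreal_ofReal) measurable_const
  set H : EuclideanSpace ℝ (Fin 2) → ℝ≥0∞ := fun z => f₀ ‖z‖ with hH
  have h1 : ∫⁻ x in closedBall y D, ENNReal.ofReal (D / ‖x - y‖) = ∫⁻ x : EuclideanSpace ℝ (Fin 2), H (x - y) := by
    rw [← lintegral_indicator measurableSet_closedBall]
    refine lintegral_congr fun x => ?_
    by_cases hx : x ∈ closedBall y D
    · have hx' : ‖x - y‖ ≤ D := by rwa [mem_closedBall, dist_eq_norm] at hx
      simp [Set.indicator_of_mem hx, hH, hf₀, hx']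
    · have hx' : ¬ ‖x - y‖ ≤ D := by rwa [mem_closedBall, dist_eq_norm] at hx
      simp [Set.indicator_of_notMem hx, hH, hf₀, hx']
  have h2 : ∫⁻ x : EuclideanSpace ℝ (Fin 2), H (x - y) = ∫⁻ x : EuclideanSpace ℝ (Fin 2), H x := lintegral_sub_right_eq_self H y
  have h3 : ∫⁻ x : EuclideanSpace ℝ (Fin 2), H x = 2 * volume (ball (0 : EuclideanSpace ℝ (Fin 2)) 1) *
      ∫⁻ r in Ioi (0:ℝ), ENNReal.ofReal r * f₀ r := polar2 f₀ hf₀m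
  have h4 : ∫⁻ r in Ioi (0:ℝ), ENNReal.ofReal r * f₀ r
      = ENNReal.ofReal D * ENNReal.ofReal D := by
    have hcong : ∀ᵐ r ∂(volume : Measure ℝ), r ∈ Ioi (0:ℝ) →
        ENNReal.ofReal r * f₀ r = (Ioc (0:ℝ) D).indicator (fun _ => ENNReal.ofReal D) r := by
      refine Filter.Eventually.of_forall fun r hr => ?_
      rcases le_or_gt r D with h | h
      · have : r ∈ Ioc (0:ℝ) D := ⟨hr, h⟩
        rw [Set.indicator_of_mem this]
        simp only [hf₀, if_pos h]
        rw [← ENNReal.ofReal_mul (le_of_lt hr), mul_div_cancel₀ _ (ne_of_gt hr)]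
      · have : r ∉ Ioc (0:ℝ) D := fun hc => absurd hc.2 (not_le.mpr h)
        rw [Set.indicator_of_notMem this]
        simp [hf₀, not_le.mpr h]
    rw [setLIntegral_congr_fun_ae measurableSet_Ioi hcong,
      lintegral_indicator measurableSet_Ioc, Measure.restrict_restrict measurableSet_Ioc,
      Set.Ioc_inter_Ioi, sup_of_le_left le_rfl, lintegral_const, Measure.restrict_apply_univ,
      Real.volume_Ioc, sub_zero]
  have hball : volume (ball (0 : EuclideanSpace ℝ (Fin 2)) 1) = ENNReal.ofReal π := by
    rw [EuclideanSpace.volume_ball]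
    norm_num
    rw [← ENNReal.ofReal_pow (Real.sqrt_nonneg _), Real.sq_sqrt pi_nonneg]
  rw [h1, h2, h3, h4, hball]
  rw [show (2:ℝ≥0∞) = ENNReal.ofReal 2 by simp, ← ENNReal.ofReal_mul (by norm_num : (0:ℝ) ≤ 2),
    ← ENNReal.ofReal_mul (le_of_lt hD), ← ENNReal.ofReal_mul (by positivity : (0:ℝ) ≤ 2 * π)]
  congr 1
  ring

private lemma key_pointwise
    (Ω : Set (EuclideanSpace ℝ (Fin 2))) (hΩ : MeasurableSet Ω)
    (D K M : ℝ) (hD : 0 < D) (hK : 0 ≤ K) (hM : 0 < M)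
    (g : EuclideanSpace ℝ (Fin 2) → ℝ) (hg : IntegrableOn g Ω)
    (hM' : M = ∫ y in Ω, |g y|)
    (x : EuclideanSpace ℝ (Fin 2)) (hx : ∀ y ∈ Ω, ‖x - y‖ ≤ D)
    (t : ℝ)
    (ht : t ≤ ∫ y in Ω, ((1 / π) * Real.log (D / ‖x - y‖) + K) * |g y|) :
    ENNReal.ofReal (Real.exp (π * t / M)) ≤ ENNReal.ofReal (Real.exp (π * K) / M) *
      ∫⁻ y in Ω, ENNReal.ofReal (D / ‖x - y‖) * ENNReal.ofReal |g y| := by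
  set T := ∫⁻ y in Ω, ENNReal.ofReal (D / ‖x - y‖) * ENNReal.ofReal |g y| with hT'
  by_cases hT : T = ⊤
  · rw [hT, ENNReal.mul_top (by
      simpa using ENNReal.ofReal_pos.mpr (by positivity : (0:ℝ) < Real.exp (π * K) / M) |>.ne')]
    exact le_top
  -- basic measurability / integrability
  have hmeas1 : Measurable fun y : EuclideanSpace ℝ (Fin 2) => D / ‖x - y‖ :=
    measurable_const.div ((measurable_const.sub measurable_id).norm)
  have habs : IntegrableOn (fun y => |g y|) Ω := hg.abs
  have hgm : AEStronglyMeasurable (fun y => |g y|) (volume.restrict Ω) := habs.1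
  have hw_meas : AEStronglyMeasurable (fun y => D / ‖x - y‖ * |g y|) (volume.restrict Ω) :=
    hmeas1.aestronglyMeasurable.mul hgm
  have hwnonneg : ∀ y, 0 ≤ D / ‖x - y‖ * |g y| := fun y =>
    mul_nonneg (div_nonneg hD.le (norm_nonneg _)) (abs_nonneg _)
  have hofreal : ∀ y, ENNReal.ofReal (D / ‖x - y‖ * |g y|)
      = ENNReal.ofReal (D / ‖x - y‖) * ENNReal.ofReal |g y| := fun y =>
    ENNReal.ofReal_mul (div_nonneg hD.le (norm_nonneg _))
  have hw : IntegrableOn (fun y => D / ‖x - y‖ * |g y|) Ω := by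
    refine ⟨hw_meas, ?_⟩
    rw [hasFiniteIntegral_iff_ofReal (Filter.Eventually.of_forall hwnonneg)]
    rw [show (∫⁻ y in Ω, ENNReal.ofReal (D / ‖x - y‖ * |g y|)) = T from
      lintegral_congr fun y => hofreal y]
    exact lt_top_iff_ne_top.mpr hT
  have hTval : ∫ y in Ω, D / ‖x - y‖ * |g y| = T.toReal := by
    rw [integral_eq_lintegral_of_nonneg_ae (Filter.Eventually.of_forall hwnonneg) hw_meas]
    congr 1
    exact lintegral_congr fun y => hofreal y
  have hTnn : 0 ≤ T.toReal := ENNReal.toReal_nonneg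
  -- the log integrand
  set φ : EuclideanSpace ℝ (Fin 2) → ℝ := fun y => Real.log (D / ‖x - y‖) + π * K with hφ'
  have hφ_bound : ∀ y ∈ Ω, abs (φ y * |g y|) ≤ D / ‖x - y‖ * |g y| + π * K * |g y| := by
    intro y hy
    have hr : ‖x - y‖ ≤ D := hx y hy
    have hπK : 0 ≤ π * K := by positivity
    have habsφ : |φ y| ≤ D / ‖x - y‖ + π * K := by
      rcases eq_or_lt_of_le (norm_nonneg (x - y)) with h0 | h0
      · have hφy : φ y = π * K := by simp [hφ', ← h0]
        rw [hφy, abs_of_nonneg hπK, ← h0, div_zero]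
        linarith
      · have hdiv : 1 ≤ D / ‖x - y‖ := (one_le_div h0).mpr hr
        have hlog0 : 0 ≤ Real.log (D / ‖x - y‖) := Real.log_nonneg hdiv
        have hlog1 : Real.log (D / ‖x - y‖) ≤ D / ‖x - y‖ :=
          (Real.log_le_sub_one_of_pos (by linarith)).trans (by linarith)
        rw [abs_of_nonneg (by positivity)]
        linarith
    calc abs (φ y * |g y|) = |φ y| * |g y| := by rw [abs_mul, abs_abs]
      _ ≤ (D / ‖x - y‖ + π * K) * |g y| :=
          mul_le_mul_of_nonneg_right habsφ (abs_nonneg _)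
      _ = D / ‖x - y‖ * |g y| + π * K * |g y| := by ring
  have hφ_meas : AEStronglyMeasurable (fun y => φ y * |g y|) (volume.restrict Ω) :=
    (((Real.measurable_log.comp hmeas1).add_const (π * K)).aestronglyMeasurable).mul hgm
  have hφint : IntegrableOn (fun y => φ y * |g y|) Ω := by
    refine Integrable.mono' (hw.add (habs.const_mul (π * K))) hφ_meas ?_
    filter_upwards [ae_restrict_mem hΩ] with y hy
    rw [Real.norm_eq_abs]
    exact hφ_bound y hy
  -- π t ≤ ∫ φ |g|
  have hI : π * t ≤ ∫ y in Ω, φ y * |g y| := by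
    have h1 : π * t ≤ π * ∫ y in Ω, ((1 / π) * Real.log (D / ‖x - y‖) + K) * |g y| :=
      mul_le_mul_of_nonneg_left ht pi_pos.le
    have h2 : π * ∫ y in Ω, ((1 / π) * Real.log (D / ‖x - y‖) + K) * |g y|
        = ∫ y in Ω, φ y * |g y| := by
      rw [← integral_const_mul]
      refine integral_congr_ae (Filter.Eventually.of_forall fun y => ?_)
      simp only [hφ']
      have hπ : π * (1 / π * Real.log (D / ‖x - y‖) + K)
          = Real.log (D / ‖x - y‖) + π * K := by field_simp
      calc π * ((1 / π * Real.log (D / ‖x - y‖) + K) * |g y|)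
          = π * (1 / π * Real.log (D / ‖x - y‖) + K) * |g y| := by ring
        _ = (Real.log (D / ‖x - y‖) + π * K) * |g y| := by rw [hπ]
    linarith [h2 ▸ h1]
  set a := (∫ y in Ω, φ y * |g y|) / M with ha'
  have haM : a * M = ∫ y in Ω, φ y * |g y| := div_mul_cancel₀ _ hM.ne'
  -- a.e. equality for exp φ
  have hxnull : (volume.restrict Ω) {x} = 0 :=
    le_antisymm (le_trans (Measure.restrict_le_self _) (measure_singleton x).le) (by simp)
  have haene : ∀ᵐ y ∂(volume.restrict Ω), y ≠ x := by
    rw [ae_iff]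
    simpa using hxnull
  have hexpφ_eq : (fun y => Real.exp (φ y) * |g y|) =ᵐ[volume.restrict Ω]
      fun y => Real.exp (π * K) * (D / ‖x - y‖ * |g y|) := by
    filter_upwards [haene] with y hy
    have hr0 : (0:ℝ) < ‖x - y‖ := by
      rw [norm_pos_iff, sub_ne_zero]
      exact fun h => hy h.symm
    rw [hφ', Real.exp_add, Real.exp_log (div_pos hD hr0)]
    ring
  have hRHSint : Integrable (fun y => Real.exp (φ y) * |g y|) (volume.restrict Ω) :=
    (hw.const_mul (Real.exp (π * K))).congr hexpφ_eq.symm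
  have hLHSeq : (fun y => Real.exp a * (φ y - a + 1) * |g y|)
      = fun y => Real.exp a * (φ y * |g y|) + Real.exp a * (1 - a) * |g y| :=
    funext fun y => by ring
  have hLHSint : Integrable (fun y => Real.exp a * (φ y - a + 1) * |g y|)
      (volume.restrict Ω) := by
    rw [hLHSeq]
    exact (hφint.const_mul _).add (habs.const_mul _)
  have h_tangent : ∀ y, Real.exp a * (φ y - a + 1) * |g y| ≤ Real.exp (φ y) * |g y| := by
    intro y
    refine mul_le_mul_of_nonneg_right ?_ (abs_nonneg _)
    have h1 : φ y - a + 1 ≤ Real.exp (φ y - a) := Real.add_one_le_exp _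
    calc Real.exp a * (φ y - a + 1) ≤ Real.exp a * Real.exp (φ y - a) :=
          mul_le_mul_of_nonneg_left h1 (Real.exp_pos a).le
      _ = Real.exp (φ y) := by rw [← Real.exp_add]; congr 1; ring
  have hmono := integral_mono_ae hLHSint hRHSint (Filter.Eventually.of_forall h_tangent)
  have hLHSval : ∫ y in Ω, Real.exp a * (φ y - a + 1) * |g y| = Real.exp a * M := by
    rw [hLHSeq, integral_add (hφint.const_mul _) (habs.const_mul _),
      integral_const_mul, integral_const_mul, ← hM', ← haM]
    ring
  have hRHSval : ∫ y in Ω, Real.exp (φ y) * |g y|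
      = Real.exp (π * K) * T.toReal := by
    rw [integral_congr_ae hexpφ_eq, integral_const_mul, hTval]
  rw [hLHSval, hRHSval] at hmono
  -- conclude
  have h1 : Real.exp (π * t / M) ≤ Real.exp a := by
    refine Real.exp_le_exp.mpr ?_
    rw [ha']
    gcongr
  have h2 : Real.exp a ≤ Real.exp (π * K) / M * T.toReal := by
    rw [div_mul_eq_mul_div, le_div_iff₀ hM]
    linarith
  calc ENNReal.ofReal (Real.exp (π * t / M))
      ≤ ENNReal.ofReal (Real.exp (π * K) / M * T.toReal) :=
        ENNReal.ofReal_le_ofReal (h1.trans h2)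
    _ = ENNReal.ofReal (Real.exp (π * K) / M) * ENNReal.ofReal T.toReal :=
        ENNReal.ofReal_mul (by positivity)
    _ = ENNReal.ofReal (Real.exp (π * K) / M) * T := by rw [ENNReal.ofReal_toReal hT]


theorem stmt_8 (Ω : Set (EuclideanSpace ℝ (Fin 2))) (hΩ : MeasurableSet Ω)
    (D : ℝ) (hD : 0 < D) (hdiam : ∀ x ∈ Ω, ∀ y ∈ Ω, ‖x - y‖ ≤ D)
    (K : ℝ) (hK : 0 ≤ K)
    (g : EuclideanSpace ℝ (Fin 2) → ℝ) (hg : IntegrableOn g Ω)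
    (hgpos : 0 < ∫ y in Ω, |g y|)
    (v : EuclideanSpace ℝ (Fin 2) → ℝ) (hv : Measurable v)
    (hbound : ∀ᵐ x ∂(volume.restrict Ω),
      |v x| ≤ ∫ y in Ω, ((1 / π) * Real.log (D / ‖x - y‖) + K) * |g y|) :
    ∫ x in Ω, Real.exp (π * |v x| / ∫ y in Ω, |g y|)
      ≤ 2 * π * D ^ 2 * Real.exp (π * K) := by
  set M := ∫ y in Ω, |g y| with hM'
  have hM : 0 < M := hgpos
  have habs : IntegrableOn (fun y => |g y|) Ω := hg.abs
  -- pointwise key bound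
  have hkey : ∀ᵐ x ∂(volume.restrict Ω),
      ENNReal.ofReal (Real.exp (π * |v x| / M)) ≤ ENNReal.ofReal (Real.exp (π * K) / M) *
        ∫⁻ y in Ω, ENNReal.ofReal (D / ‖x - y‖) * ENNReal.ofReal |g y| := by
    filter_upwards [hbound, ae_restrict_mem hΩ] with x hb hxΩ
    exact key_pointwise Ω hΩ D K M hD hK hM g hg hM' x
      (fun y hy => hdiam x hxΩ y hy) _ hb
  -- Tonelli and the ball integral
  have hFmeas : AEMeasurable
      (fun z : (EuclideanSpace ℝ (Fin 2)) × (EuclideanSpace ℝ (Fin 2)) =>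
        ENNReal.ofReal (D / ‖z.1 - z.2‖) * ENNReal.ofReal |g z.2|)
      ((volume.restrict Ω).prod (volume.restrict Ω)) := by
    refine AEMeasurable.fun_mul ?_ ?_
    · exact ((measurable_const.div ((measurable_fst.sub measurable_snd).norm)).ennreal_ofReal).aemeasurable
    · exact (habs.aemeasurable.ennreal_ofReal).comp_snd
  have hswap : ∫⁻ x in Ω, ∫⁻ y in Ω, ENNReal.ofReal (D / ‖x - y‖) * ENNReal.ofReal |g y|
      = ∫⁻ y in Ω, ∫⁻ x in Ω, ENNReal.ofReal (D / ‖x - y‖) * ENNReal.ofReal |g y| :=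
    lintegral_lintegral_swap hFmeas
  have hinner : ∀ y ∈ Ω, (∫⁻ x in Ω, ENNReal.ofReal (D / ‖x - y‖) * ENNReal.ofReal |g y|)
      ≤ ENNReal.ofReal |g y| * ENNReal.ofReal (2 * π * D ^ 2) := by
    intro y hy
    have h1 : (∫⁻ x in Ω, ENNReal.ofReal (D / ‖x - y‖) * ENNReal.ofReal |g y|)
        = (∫⁻ x in Ω, ENNReal.ofReal (D / ‖x - y‖)) * ENNReal.ofReal |g y| :=
      lintegral_mul_const' _ _ ENNReal.ofReal_ne_top
    have hsub : Ω ⊆ Metric.closedBall y D := fun z hz => by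
      rw [Metric.mem_closedBall, dist_eq_norm]
      exact hdiam z hz y hy
    have h2 : (∫⁻ x in Ω, ENNReal.ofReal (D / ‖x - y‖))
        ≤ ∫⁻ x in Metric.closedBall y D, ENNReal.ofReal (D / ‖x - y‖) :=
      lintegral_mono_set hsub
    rw [h1, ball_lintegral D hD y] at *
    calc (∫⁻ x in Ω, ENNReal.ofReal (D / ‖x - y‖)) * ENNReal.ofReal |g y|
        ≤ ENNReal.ofReal (2 * π * D ^ 2) * ENNReal.ofReal |g y| :=
          mul_le_mul_left h2 _
      _ = ENNReal.ofReal |g y| * ENNReal.ofReal (2 * π * D ^ 2) := mul_comm _ _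
  have hglint : ∫⁻ y in Ω, ENNReal.ofReal |g y| = ENNReal.ofReal M := by
    rw [hM', ofReal_integral_eq_lintegral_ofReal habs
      (Filter.Eventually.of_forall fun y => abs_nonneg _)]
  have hmain : ∫⁻ x in Ω, ENNReal.ofReal (Real.exp (π * |v x| / M))
      ≤ ENNReal.ofReal (2 * π * D ^ 2 * Real.exp (π * K)) := by
    calc ∫⁻ x in Ω, ENNReal.ofReal (Real.exp (π * |v x| / M))
        ≤ ∫⁻ x in Ω, ENNReal.ofReal (Real.exp (π * K) / M) *
            ∫⁻ y in Ω, ENNReal.ofReal (D / ‖x - y‖) * ENNReal.ofReal |g y| :=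
          lintegral_mono_ae hkey
      _ = ENNReal.ofReal (Real.exp (π * K) / M) *
            ∫⁻ x in Ω, ∫⁻ y in Ω, ENNReal.ofReal (D / ‖x - y‖) * ENNReal.ofReal |g y| :=
          lintegral_const_mul' _ _ ENNReal.ofReal_ne_top
      _ = ENNReal.ofReal (Real.exp (π * K) / M) *
            ∫⁻ y in Ω, ∫⁻ x in Ω, ENNReal.ofReal (D / ‖x - y‖) * ENNReal.ofReal |g y| := by
          rw [hswap]
      _ ≤ ENNReal.ofReal (Real.exp (π * K) / M) *
            ∫⁻ y in Ω, ENNReal.ofReal |g y| * ENNReal.ofReal (2 * π * D ^ 2) := by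
          refine mul_le_mul_right ?_ _
          refine lintegral_mono_ae ?_
          filter_upwards [ae_restrict_mem hΩ] with y hy
          exact hinner y hy
      _ = ENNReal.ofReal (Real.exp (π * K) / M) *
            (ENNReal.ofReal M * ENNReal.ofReal (2 * π * D ^ 2)) := by
          rw [lintegral_mul_const' _ _ ENNReal.ofReal_ne_top, hglint]
      _ = ENNReal.ofReal (2 * π * D ^ 2 * Real.exp (π * K)) := by
          rw [← ENNReal.ofReal_mul (by positivity), ← ENNReal.ofReal_mul (by positivity)]
          congr 1
          field_simp
  have hvmeas : AEStronglyMeasurable (fun x => Real.exp (π * |v x| / M))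
      (volume.restrict Ω) :=
    (Real.measurable_exp.comp (((hv.abs.const_mul π).div_const M))).aestronglyMeasurable
  rw [integral_eq_lintegral_of_nonneg_ae
    (Filter.Eventually.of_forall fun x => (Real.exp_pos _).le) hvmeas]
  exact ENNReal.toReal_le_of_le_ofReal (by positivity) hmain
end

section
/- Let Ω ⊆ ℝ² be a measurable set and D > 0 a constant with ‖x − y‖ ≤ D for all x, y ∈ Ω. Let K ≥ 0, C₁ > 0, q > 0, and ε > 0 with ε ≥ q·C₁/π. Let g : Ω → ℝ be integrable with 0 < ∫_Ω |g| dy ≤ C₁/ε, and let v : Ω → ℝ be measurable with |v(x)| ≤ ∫_Ω ((1/π)·log(D/‖x − y‖) + K)·|g(y)| dy for almost every x ∈ Ω. Then ∫_Ω e^{q·|v(x)|} dx ≤ 2π·D²·e^{πK}. -/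
open MeasureTheory Real Set
open scoped NNReal ENNReal

private lemma vol_ball2 (y : EuclideanSpace ℝ (Fin 2)) {r : ℝ} (hr : 0 ≤ r) :
    volume (Metric.ball y r) = ENNReal.ofReal (π * r ^ 2) := by
  rw [EuclideanSpace.volume_ball]
  simp only [Fintype.card_fin]
  rw [show ((2:ℕ):ℝ) / 2 + 1 = 2 by norm_num, Real.Gamma_two]
  rw [show Real.sqrt π ^ 2 / 1 = π by rw [sq_sqrt Real.pi_pos.le]; ring]
  rw [← ENNReal.ofReal_pow hr, ← ENNReal.ofReal_mul (by positivity), mul_comm]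

private lemma radial_bound (y : EuclideanSpace ℝ (Fin 2)) {D : ℝ} (hD : 0 < D) :
    ∫⁻ x in Metric.closedBall y D, ENNReal.ofReal (D / ‖x - y‖) ≤
      ENNReal.ofReal (2 * π * D ^ 2) := by
  have hmeas : Measurable fun x : EuclideanSpace ℝ (Fin 2) => D / ‖x - y‖ :=
    measurable_const.div ((continuous_id.sub continuous_const).norm.measurable)
  have hnn : 0 ≤ᵐ[volume.restrict (Metric.closedBall y D)]
      fun x : EuclideanSpace ℝ (Fin 2) => D / ‖x - y‖ :=
    Filter.Eventually.of_forall fun x => div_nonneg hD.le (norm_nonneg _)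
  rw [lintegral_eq_lintegral_meas_lt _ hnn hmeas.aemeasurable]
  have hsplit : Ioi (0:ℝ) = Ioc 0 1 ∪ Ioi 1 := (Ioc_union_Ioi_eq_Ioi zero_le_one).symm
  rw [hsplit, lintegral_union measurableSet_Ioi (Ioc_disjoint_Ioi le_rfl)]
  have hcball : volume (Metric.closedBall y D) = ENNReal.ofReal (π * D ^ 2) := by
    rw [Measure.addHaar_closedBall_eq_addHaar_ball, vol_ball2 y hD.le]
  have h1 : ∫⁻ t in Ioc (0:ℝ) 1,
      (volume.restrict (Metric.closedBall y D)) {a | t < D / ‖a - y‖} ≤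
      ENNReal.ofReal (π * D ^ 2) := by
    calc ∫⁻ t in Ioc (0:ℝ) 1, (volume.restrict (Metric.closedBall y D)) {a | t < D / ‖a - y‖}
        ≤ ∫⁻ _ in Ioc (0:ℝ) 1, ENNReal.ofReal (π * D ^ 2) := by
          refine lintegral_mono fun t => ?_
          rw [← hcball]
          exact le_trans (measure_mono (Set.subset_univ _)) (by simp)
      _ = ENNReal.ofReal (π * D ^ 2) := by
          rw [setLIntegral_const, Real.volume_Ioc]; simp
  have h2 : ∫⁻ t in Ioi (1:ℝ),
      (volume.restrict (Metric.closedBall y D)) {a | t < D / ‖a - y‖} ≤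
      ENNReal.ofReal (π * D ^ 2) := by
    have hb : ∀ t ∈ Ioi (1:ℝ), (volume.restrict (Metric.closedBall y D)) {a | t < D / ‖a - y‖}
        ≤ ENNReal.ofReal (π * D ^ 2 * t ^ (-2 : ℝ)) := by
      intro t ht
      have ht0 : (0:ℝ) < t := lt_trans one_pos ht
      have hsub : {a : EuclideanSpace ℝ (Fin 2) | t < D / ‖a - y‖} ⊆ Metric.ball y (D / t) := by
        intro a ha
        simp only [Set.mem_setOf_eq] at ha
        have hr0 : 0 < ‖a - y‖ := by
          by_contra hcon
          push_neg at hcon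
          have hz : ‖a - y‖ = 0 := le_antisymm hcon (norm_nonneg _)
          rw [hz] at ha
          norm_num at ha
          linarith
        rw [Metric.mem_ball, dist_eq_norm]
        rw [lt_div_iff₀ hr0] at ha
        rw [lt_div_iff₀ ht0]; linarith [ha]
      calc (volume.restrict (Metric.closedBall y D)) {a | t < D / ‖a - y‖}
          ≤ volume (Metric.ball y (D / t)) :=
            le_trans (Measure.restrict_le_self _) (measure_mono hsub)
        _ = ENNReal.ofReal (π * (D / t) ^ 2) := vol_ball2 y (by positivity)
        _ = ENNReal.ofReal (π * D ^ 2 * t ^ (-2 : ℝ)) := by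
            congr 1
            rw [Real.rpow_neg ht0.le, show (2:ℝ) = ((2:ℕ):ℝ) by norm_num, Real.rpow_natCast]
            field_simp
    calc ∫⁻ t in Ioi (1:ℝ), (volume.restrict (Metric.closedBall y D)) {a | t < D / ‖a - y‖}
        ≤ ∫⁻ t in Ioi (1:ℝ), ENNReal.ofReal (π * D ^ 2 * t ^ (-2 : ℝ)) := by
          refine setLIntegral_mono' measurableSet_Ioi hb
      _ = ENNReal.ofReal (∫ t in Ioi (1:ℝ), π * D ^ 2 * t ^ (-2 : ℝ)) := by
          rw [ofReal_integral_eq_lintegral_ofReal]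
          · exact (integrableOn_Ioi_rpow_of_lt (by norm_num) one_pos).const_mul _
          · filter_upwards [ae_restrict_mem measurableSet_Ioi] with t ht
            have : (0:ℝ) < t := lt_trans one_pos ht
            positivity
      _ = ENNReal.ofReal (π * D ^ 2) := by
          rw [integral_const_mul, integral_Ioi_rpow_of_lt (by norm_num) one_pos]
          norm_num
  calc _ ≤ ENNReal.ofReal (π * D ^ 2) + ENNReal.ofReal (π * D ^ 2) := add_le_add h1 h2
    _ = ENNReal.ofReal (2 * π * D ^ 2) := by
        rw [← ENNReal.ofReal_add (by positivity) (by positivity)]; ring_nf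

set_option maxHeartbeats 1000000 in
theorem stmt_9 (Ω : Set (EuclideanSpace ℝ (Fin 2))) (hΩ : MeasurableSet Ω)
    (D : ℝ) (hD : 0 < D) (hdiam : ∀ x ∈ Ω, ∀ y ∈ Ω, ‖x - y‖ ≤ D)
    (K : ℝ) (hK : 0 ≤ K) (C₁ : ℝ) (hC₁ : 0 < C₁) (q : ℝ) (hq : 0 < q)
    (ε : ℝ) (hε : 0 < ε) (hεq : q * C₁ / π ≤ ε)
    (g : EuclideanSpace ℝ (Fin 2) → ℝ) (hg : IntegrableOn g Ω)
    (hgpos : 0 < ∫ y in Ω, |g y|) (hgle : ∫ y in Ω, |g y| ≤ C₁ / ε)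
    (v : EuclideanSpace ℝ (Fin 2) → ℝ) (hv : Measurable v)
    (hbound : ∀ᵐ x ∂(volume.restrict Ω),
      |v x| ≤ ∫ y in Ω, ((1 / π) * Real.log (D / ‖x - y‖) + K) * |g y|) :
    ∫ x in Ω, Real.exp (q * |v x|) ≤ 2 * π * D ^ 2 * Real.exp (π * K) := by
  have hπ : (0:ℝ) < π := Real.pi_pos
  set M := ∫ y in Ω, |g y| with hMdef
  have hM : 0 < M := hgpos
  have hqM : q * M ≤ π := by
    rw [div_le_iff₀ hπ] at hεq
    rw [le_div_iff₀ hε] at hgle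
    nlinarith
  set α := q * M / π with hαdef
  have hα0 : 0 < α := by positivity
  have hα1 : α ≤ 1 := by rw [hαdef, div_le_one hπ]; exact hqM
  have hgabs : IntegrableOn (fun y => |g y|) Ω := hg.abs
  have hgae : AEMeasurable (fun y => |g y|) (volume.restrict Ω) := hgabs.aemeasurable
  set c := Real.exp (q * M * K) / M with hcdef
  have hc0 : 0 < c := by positivity
  -- the weight and the probability measure
  set w : EuclideanSpace ℝ (Fin 2) → ℝ≥0 := fun y => Real.toNNReal (|g y| / M) with hwdef
  have hwcoe : ∀ y, ((w y : ℝ)) = |g y| / M := fun y => Real.coe_toNNReal _ (by positivity)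
  have hwae : AEMeasurable w (volume.restrict Ω) :=
    measurable_real_toNNReal.comp_aemeasurable (hgae.div_const M)
  set μ : Measure (EuclideanSpace ℝ (Fin 2)) :=
    (volume.restrict Ω).withDensity (fun y => (w y : ℝ≥0∞)) with hμdef
  have hwint : Integrable (fun y => ((w y : ℝ))) (volume.restrict Ω) := by
    rw [show (fun y => ((w y):ℝ)) = fun y => |g y| / M from funext hwcoe]
    exact hgabs.div_const M
  have hprob : IsProbabilityMeasure μ := by
    constructor
    rw [hμdef, withDensity_apply _ MeasurableSet.univ, setLIntegral_univ,
      lintegral_coe_eq_integral w hwint]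
    have h1 : ∫ y, ((w y):ℝ) ∂(volume.restrict Ω) = 1 := by
      rw [show (fun y => ((w y):ℝ)) = fun y => |g y| / M from funext hwcoe, integral_div]
      exact div_self hM.ne'
    rw [h1, ENNReal.ofReal_one]
  haveI := hprob
  -- pointwise (in x) bound
  have hptwise : ∀ᵐ x ∂(volume.restrict Ω), ENNReal.ofReal (Real.exp (q * |v x|)) ≤
      ∫⁻ y in Ω, ENNReal.ofReal (c * (D / ‖x - y‖ * |g y|)) := by
    filter_upwards [hbound, ae_restrict_mem hΩ] with x hvx hxΩ
    have hkmeas : Measurable fun y : EuclideanSpace ℝ (Fin 2) => D / ‖x - y‖ :=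
      measurable_const.div ((continuous_const.sub continuous_id).norm.measurable)
    have hknn : ∀ y : EuclideanSpace ℝ (Fin 2), 0 ≤ D / ‖x - y‖ :=
      fun y => div_nonneg hD.le (norm_nonneg _)
    by_cases hint : IntegrableOn (fun y => D / ‖x - y‖ * |g y|) Ω
    · -- main case : Jensen
      have hrle : ∀ y ∈ Ω, ‖x - y‖ ≤ D := fun y hy => hdiam x hxΩ y hy
      set f : EuclideanSpace ℝ (Fin 2) → ℝ :=
        fun y => q * M * ((1 / π) * Real.log (D / ‖x - y‖) + K) with hfdef
      have hfmeas : Measurable f :=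
        (((Real.measurable_log.comp hkmeas).const_mul (1 / π)).add_const K).const_mul (q * M)
      have hlog0 : ∀ y : EuclideanSpace ℝ (Fin 2), ‖x - y‖ = 0 →
          Real.log (D / ‖x - y‖) = 0 := by
        intro y hy; rw [hy]; norm_num
      have hlogk : ∀ y ∈ Ω, 0 ≤ (1 / π) * Real.log (D / ‖x - y‖) + K ∧
          (1 / π) * Real.log (D / ‖x - y‖) + K ≤ (1 / π) * (D / ‖x - y‖) + K := by
        intro y hy
        rcases eq_or_lt_of_le (norm_nonneg (x - y)) with h0 | h0
        · rw [hlog0 y h0.symm]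
          constructor
          · linarith
          · have h5 : 0 ≤ 1 / π * (D / ‖x - y‖) := mul_nonneg (by positivity) (hknn y)
            linarith
        · have h1le : 1 ≤ D / ‖x - y‖ := (one_le_div h0).mpr (hrle y hy)
          have hlognn : 0 ≤ Real.log (D / ‖x - y‖) := Real.log_nonneg h1le
          have hlogle : Real.log (D / ‖x - y‖) ≤ D / ‖x - y‖ := by
            have := Real.log_le_sub_one_of_pos (show (0:ℝ) < D / ‖x - y‖ by positivity)
            linarith
          constructor
          · have : 0 ≤ (1 / π) * Real.log (D / ‖x - y‖) := by positivity
            linarith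
          · have h6 := mul_le_mul_of_nonneg_left hlogle (by positivity : (0:ℝ) ≤ 1 / π)
            linarith
      have h1 : IntegrableOn
          (fun y => ((1 / π) * Real.log (D / ‖x - y‖) + K) * |g y|) Ω := by
        have hdom : IntegrableOn
            (fun y => (1 / π) * (D / ‖x - y‖ * |g y|) + K * |g y|) Ω :=
          (hint.const_mul (1 / π)).add (hgabs.const_mul K)
        refine Integrable.mono hdom ?_ ?_
        · exact ((((Real.measurable_log.comp hkmeas).const_mul
            (1 / π)).add_const K).aemeasurable.mul hgae).aestronglyMeasurable
        · filter_upwards [ae_restrict_mem hΩ] with y hy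
          obtain ⟨hge0, hle⟩ := hlogk y hy
          have hRnn : 0 ≤ 1 / π * (D / ‖x - y‖ * |g y|) + K * |g y| :=
            add_nonneg (mul_nonneg (by positivity) (mul_nonneg (hknn y) (abs_nonneg _)))
              (mul_nonneg hK (abs_nonneg _))
          have hLnn : 0 ≤ (1 / π * Real.log (D / ‖x - y‖) + K) * |g y| :=
            mul_nonneg hge0 (abs_nonneg _)
          rw [Real.norm_eq_abs, Real.norm_eq_abs, abs_of_nonneg hLnn, abs_of_nonneg hRnn]
          calc (1 / π * Real.log (D / ‖x - y‖) + K) * |g y|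
              ≤ (1 / π * (D / ‖x - y‖) + K) * |g y| :=
                mul_le_mul_of_nonneg_right hle (abs_nonneg _)
            _ = 1 / π * (D / ‖x - y‖ * |g y|) + K * |g y| := by ring
      have hfμ : Integrable f μ := by
        rw [hμdef, integrable_withDensity_iff_integrable_smul₀ hwae]
        rw [show (fun y => w y • f y)
            = fun y => q * (((1 / π) * Real.log (D / ‖x - y‖) + K) * |g y|) from
          funext fun y => by
            simp only [NNReal.smul_def, hwcoe y, smul_eq_mul, hfdef]
            field_simp]
        exact h1.const_mul q
      have hexp_eq : ∀ y : EuclideanSpace ℝ (Fin 2), ‖x - y‖ ≠ 0 →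
          Real.exp (f y) = Real.exp (q * M * K) * (D / ‖x - y‖) ^ α := by
        intro y hy
        have hr0 : 0 < ‖x - y‖ := lt_of_le_of_ne (norm_nonneg _) (Ne.symm hy)
        have hpos : 0 < D / ‖x - y‖ := by positivity
        have hfy : f y = Real.log (D / ‖x - y‖) * α + q * M * K := by
          simp only [hfdef, hαdef]; field_simp
        rw [hfy, Real.exp_add, Real.rpow_def_of_pos hpos]; ring
      have hexp_le : ∀ y : EuclideanSpace ℝ (Fin 2),
          Real.exp (f y) ≤ Real.exp (q * M * K) * (1 + D / ‖x - y‖) := by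
        intro y
        rcases eq_or_lt_of_le (norm_nonneg (x - y)) with h0 | h0
        · have : f y = q * M * K := by
            simp only [hfdef]; rw [hlog0 y h0.symm]; ring
          rw [this]
          nlinarith [Real.exp_pos (q * M * K), hknn y]
        · rw [hexp_eq y h0.ne']
          have hb : (D / ‖x - y‖) ^ α ≤ 1 + D / ‖x - y‖ := by
            rcases le_or_gt (D / ‖x - y‖) 1 with hle | hlt
            · have := Real.rpow_le_one (hknn y) hle hα0.le
              linarith [hknn y]
            · have h2 := Real.rpow_le_rpow_of_exponent_le hlt.le hα1
              rw [Real.rpow_one] at h2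
              linarith
          nlinarith [Real.exp_pos (q * M * K), Real.rpow_nonneg (hknn y) α]
      have hexpμ : Integrable (fun y => Real.exp (f y)) μ := by
        rw [hμdef, integrable_withDensity_iff_integrable_smul₀ hwae]
        have hdom : IntegrableOn
            (fun y => Real.exp (q * M * K) / M * (|g y| + D / ‖x - y‖ * |g y|)) Ω :=
          (hgabs.add hint).const_mul _
        refine Integrable.mono hdom ?_ ?_
        · refine (((hgae.div_const M).mul
            ((Real.measurable_exp.comp hfmeas).aemeasurable)).congr ?_).aestronglyMeasurable
          exact Filter.Eventually.of_forall fun y => by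
            simp only [NNReal.smul_def, smul_eq_mul, hwcoe, Function.comp_apply, Pi.mul_apply]
        · filter_upwards [] with y
          have hky := hknn y
          have hLnn : (0:ℝ) ≤ w y • Real.exp (f y) := by
            rw [NNReal.smul_def, smul_eq_mul]; positivity
          have hRnn : 0 ≤ Real.exp (q * M * K) / M * (|g y| + D / ‖x - y‖ * |g y|) := by
            have h8 := abs_nonneg (g y); positivity
          rw [Real.norm_eq_abs, Real.norm_eq_abs, abs_of_nonneg hLnn, abs_of_nonneg hRnn,
            NNReal.smul_def, hwcoe y, smul_eq_mul]
          calc |g y| / M * Real.exp (f y)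
              ≤ |g y| / M * (Real.exp (q * M * K) * (1 + D / ‖x - y‖)) :=
                mul_le_mul_of_nonneg_left (hexp_le y) (by positivity)
            _ = Real.exp (q * M * K) / M * (|g y| + D / ‖x - y‖ * |g y|) := by ring
      have hJ : Real.exp (∫ y, f y ∂μ) ≤ ∫ y, Real.exp (f y) ∂μ := by
        have := convexOn_exp.map_integral_le (μ := μ) continuous_exp.continuousOn
          isClosed_univ (Filter.Eventually.of_forall fun y => Set.mem_univ (f y)) hfμ
          (by exact hexpμ)
        simpa [Function.comp] using this
      have hIf : ∫ y, f y ∂μ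
          = q * ∫ y in Ω, ((1 / π) * Real.log (D / ‖x - y‖) + K) * |g y| := by
        rw [hμdef, integral_withDensity_eq_integral_smul₀ hwae f]
        rw [show (fun y => w y • f y)
            = fun y => q * (((1 / π) * Real.log (D / ‖x - y‖) + K) * |g y|) from
          funext fun y => by
            simp only [NNReal.smul_def, hwcoe y, smul_eq_mul, hfdef]
            field_simp]
        exact integral_const_mul q _
      have haex : ∀ᵐ y ∂(volume.restrict Ω), y ≠ x := by
        have h0 : (volume.restrict Ω) {x} = 0 := by
          rw [Measure.restrict_apply (measurableSet_singleton x)]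
          exact measure_mono_null Set.inter_subset_left (measure_singleton x)
        rw [ae_iff]
        convert h0 using 2
        ext z; simp
      have hIexp : ∫ y, Real.exp (f y) ∂μ ≤ ∫ y in Ω, c * (D / ‖x - y‖ * |g y|) := by
        rw [hμdef, integral_withDensity_eq_integral_smul₀ hwae]
        refine integral_mono_ae
          ((integrable_withDensity_iff_integrable_smul₀ hwae).mp (by rw [← hμdef]; exact hexpμ))
          (hint.const_mul c) ?_
        filter_upwards [ae_restrict_mem hΩ, haex] with y hy hyx
        have hr0 : 0 < ‖x - y‖ := by
          rw [norm_pos_iff, sub_ne_zero]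
          exact (Ne.symm hyx)
        rw [NNReal.smul_def, hwcoe y, smul_eq_mul, hexp_eq y hr0.ne']
        have h1le : 1 ≤ D / ‖x - y‖ := (one_le_div hr0).mpr (hrle y hy)
        have hble : (D / ‖x - y‖) ^ α ≤ D / ‖x - y‖ := by
          have h2 := Real.rpow_le_rpow_of_exponent_le h1le hα1
          rwa [Real.rpow_one] at h2
        calc |g y| / M * (Real.exp (q * M * K) * (D / ‖x - y‖) ^ α)
            ≤ |g y| / M * (Real.exp (q * M * K) * (D / ‖x - y‖)) := by
              have h3 := mul_le_mul_of_nonneg_left hble (Real.exp_pos (q * M * K)).le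
              have h4 : 0 ≤ |g y| / M := by positivity
              nlinarith
          _ = c * (D / ‖x - y‖ * |g y|) := by rw [hcdef]; field_simp
      calc ENNReal.ofReal (Real.exp (q * |v x|))
          ≤ ENNReal.ofReal (∫ y in Ω, c * (D / ‖x - y‖ * |g y|)) := by
            apply ENNReal.ofReal_le_ofReal
            refine le_trans (Real.exp_le_exp.mpr ?_) (hJ.trans hIexp)
            rw [hIf]
            exact mul_le_mul_of_nonneg_left hvx hq.le
        _ = ∫⁻ y in Ω, ENNReal.ofReal (c * (D / ‖x - y‖ * |g y|)) :=
            ofReal_integral_eq_lintegral_ofReal (hint.const_mul c)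
              (Filter.Eventually.of_forall fun y =>
                mul_nonneg hc0.le (mul_nonneg (hknn y) (abs_nonneg _)))
    · -- degenerate case : the right-hand side is infinite
      have hmeasF : AEMeasurable (fun y => D / ‖x - y‖ * |g y|) (volume.restrict Ω) :=
        hkmeas.aemeasurable.mul hgae
      have hFnn : 0 ≤ᵐ[volume.restrict Ω] fun y => D / ‖x - y‖ * |g y| :=
        Filter.Eventually.of_forall fun y => mul_nonneg (hknn y) (abs_nonneg _)
      have htop : ∫⁻ y in Ω, ENNReal.ofReal (D / ‖x - y‖ * |g y|) = ⊤ := by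
        by_contra hne
        apply hint
        refine ⟨hmeasF.aestronglyMeasurable, ?_⟩
        rw [hasFiniteIntegral_iff_ofReal hFnn]
        exact lt_top_iff_ne_top.mpr hne
      refine le_of_le_of_eq le_top ?_
      rw [show (fun y => ENNReal.ofReal (c * (D / ‖x - y‖ * |g y|)))
          = fun y => ENNReal.ofReal c * ENNReal.ofReal (D / ‖x - y‖ * |g y|) from
        funext fun y => ENNReal.ofReal_mul hc0.le]
      rw [lintegral_const_mul' _ _ ENNReal.ofReal_ne_top, htop,
        ENNReal.mul_top (by simpa using hc0)]
  -- assembly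
  obtain ⟨G, hGmeas, hGae⟩ := hgae
  have hG : ∀ᵐ y ∂(volume.restrict Ω), |g y| = G y := hGae
  have hmain : ∫⁻ x in Ω, ENNReal.ofReal (Real.exp (q * |v x|))
      ≤ ENNReal.ofReal (2 * π * D ^ 2 * Real.exp (π * K)) := by
    have hswapmeas : Measurable (Function.uncurry fun (x y : EuclideanSpace ℝ (Fin 2)) =>
        ENNReal.ofReal (D / ‖x - y‖) * ENNReal.ofReal (G y)) := by
      apply Measurable.fun_mul
      · exact ENNReal.measurable_ofReal.comp
          (measurable_const.div ((continuous_fst.sub continuous_snd).norm.measurable))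
      · exact ENNReal.measurable_ofReal.comp (hGmeas.comp measurable_snd)
    calc ∫⁻ x in Ω, ENNReal.ofReal (Real.exp (q * |v x|))
        ≤ ∫⁻ x in Ω, ∫⁻ y in Ω, ENNReal.ofReal (c * (D / ‖x - y‖ * |g y|)) :=
          lintegral_mono_ae hptwise
      _ = ∫⁻ x in Ω, ∫⁻ y in Ω, ENNReal.ofReal c *
          (ENNReal.ofReal (D / ‖x - y‖) * ENNReal.ofReal (G y)) := by
          refine lintegral_congr fun x => lintegral_congr_ae ?_
          filter_upwards [hG] with y hy
          rw [ENNReal.ofReal_mul hc0.le,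
            ENNReal.ofReal_mul (div_nonneg hD.le (norm_nonneg _)), hy]
      _ = ENNReal.ofReal c * ∫⁻ x in Ω, ∫⁻ y in Ω,
          ENNReal.ofReal (D / ‖x - y‖) * ENNReal.ofReal (G y) := by
          simp_rw [lintegral_const_mul' (ENNReal.ofReal c) _ ENNReal.ofReal_ne_top]
      _ = ENNReal.ofReal c * ∫⁻ y in Ω, ∫⁻ x in Ω,
          ENNReal.ofReal (D / ‖x - y‖) * ENNReal.ofReal (G y) := by
          rw [lintegral_lintegral_swap hswapmeas.aemeasurable]
      _ ≤ ENNReal.ofReal c * ∫⁻ y in Ω, ENNReal.ofReal (2 * π * D ^ 2) *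
          ENNReal.ofReal (G y) := by
          refine mul_le_mul_right (lintegral_mono_ae ?_) _
          filter_upwards [ae_restrict_mem hΩ] with y hyΩ
          rw [lintegral_mul_const' _ _ ENNReal.ofReal_ne_top]
          refine mul_le_mul_left ?_ _
          refine le_trans (lintegral_mono'
            (Measure.restrict_mono (fun z hz => ?_) le_rfl) le_rfl) (radial_bound y hD)
          rw [Metric.mem_closedBall, dist_eq_norm]
          exact hdiam z hz y hyΩ
      _ = ENNReal.ofReal c * (ENNReal.ofReal (2 * π * D ^ 2) * ENNReal.ofReal M) := by
          rw [lintegral_const_mul' _ _ ENNReal.ofReal_ne_top]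
          congr 1
          have hGg : ∫⁻ y in Ω, ENNReal.ofReal (G y)
              = ∫⁻ y in Ω, ENNReal.ofReal (|g y|) :=
            lintegral_congr_ae (by filter_upwards [hG] with y hy; rw [hy])
          rw [hGg, ← ofReal_integral_eq_lintegral_ofReal hgabs
            (Filter.Eventually.of_forall fun y => abs_nonneg _)]
      _ ≤ ENNReal.ofReal (2 * π * D ^ 2 * Real.exp (π * K)) := by
          rw [← ENNReal.ofReal_mul (by positivity), ← ENNReal.ofReal_mul hc0.le]
          apply ENNReal.ofReal_le_ofReal
          have hc1 : c * (2 * π * D ^ 2 * M) = 2 * π * D ^ 2 * Real.exp (q * M * K) := by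
            rw [hcdef]; field_simp
          rw [hc1]
          have h9 : Real.exp (q * M * K) ≤ Real.exp (π * K) :=
            Real.exp_le_exp.mpr (mul_le_mul_of_nonneg_right hqM hK)
          exact mul_le_mul_of_nonneg_left h9 (by positivity)
  rw [integral_eq_lintegral_of_nonneg_ae
    (Filter.Eventually.of_forall fun x => (Real.exp_pos _).le)
    ((hv.abs.const_mul q).exp.aestronglyMeasurable)]
  exact ENNReal.toReal_le_of_le_ofReal (by positivity) hmain
end
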